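/- For every feasible solution of the constructed arrears instance I′ and for every j = 2,…,m+1, letting Z_j = {y : a_{y,2} = n+1+j}, we have |X ∩ Z_j| = 1; that is, among the items corresponding to the three literals of clause c_{j−1}, exactly one is in X. -/

import Mathlib

/-! Construction of the arrears instance `I′` from a 1-IN-3SAT instance with `n`
variables and `m` clauses, where clause `j` has literals `c j 0, c j 1, c j 2`, a literal
being a pair `(i, pos)` meaning `xᵢ` if `pos = true` and `¬xᵢ` if `pos = false`. -/

/-- The base `B = 100 n² m²`. -/
def Bval (n m : ℕ) : ℕ := 100 * n ^ 2 * m ^ 2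

/-- `N = 3m(m+2) + 1`. -/
def Nval (m : ℕ) : ℕ := 3 * m * (m + 2) + 1

/-- The items: `Sum.inl (i, j, k, pos)` is `u_{i,j,k}` (if `pos = true`) or `ū_{i,j,k}`
(if `pos = false`); `Sum.inr (i, l, pos)` is `w_{i,l}` or `w̄_{i,l}`. -/
abbrev Item (n m : ℕ) :=
  (Fin n × Fin m × Fin 3 × Bool) ⊕ (Fin n × Fin (3 * m * (m + 1) + 1) × Bool)

/-- The variable index of an item. -/
def itemVar {n m : ℕ} : Item n m → Fin n
  | Sum.inl (i, _, _, _) => i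
  | Sum.inr (i, _, _) => i

/-- The polarity of an item (`true` for the `u`/`w` items, `false` for `ū`/`w̄`). -/
def itemPos {n m : ℕ} : Item n m → Bool
  | Sum.inl (_, _, _, pos) => pos
  | Sum.inr (_, _, pos) => pos

/-- First payment amount of `u_{i,j,k}`. -/
def pu (n m : ℕ) (c : Fin m → Fin 3 → Fin n × Bool) (i : Fin n) (j : Fin m) (k : Fin 3) : ℕ :=
  (Bval n m ^ 2 + ((i : ℕ) + 1)) * (Bval n m + 1) * Bval n m +
    (if c j k = (i, true) then (j : ℕ) + 2 else 0)

/-- First payment amount of `ū_{i,j,k}`. -/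
def pub (n m : ℕ) (c : Fin m → Fin 3 → Fin n × Bool) (i : Fin n) (j : Fin m) (k : Fin 3) : ℕ :=
  (Bval n m ^ 2 + ((i : ℕ) + 1)) * Bval n m ^ 2 +
    (if c j k = (i, false) then (j : ℕ) + 2 else 0)

/-- `K_i = Σ_{u ∈ U_i} (p_{u,1} mod B)`. -/
def Kv (n m : ℕ) (c : Fin m → Fin 3 → Fin n × Bool) (i : Fin n) : ℕ :=
  ∑ j : Fin m, ∑ k : Fin 3, pu n m c i j k % Bval n m

/-- `K̄_i = Σ_{u ∈ Ū_i} (p_{u,1} mod B)`. -/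
def Kbv (n m : ℕ) (c : Fin m → Fin 3 → Fin n × Bool) (i : Fin n) : ℕ :=
  ∑ j : Fin m, ∑ k : Fin 3, pub n m c i j k % Bval n m

/-- The first payment amount `p_{y,1}` of each item `y` (the second amount is `2 p_{y,1}`). -/
def p1 (n m : ℕ) (c : Fin m → Fin 3 → Fin n × Bool) : Item n m → ℕ
  | Sum.inl (i, j, k, pos) => if pos then pu n m c i j k else pub n m c i j k
  | Sum.inr (i, l, pos) =>
      if pos then
        if (l : ℕ) + 1 ≤ 3 * m * (m + 1) - Kv n m c i then
          (Bval n m ^ 2 + ((i : ℕ) + 1)) * (Bval n m + 1) * Bval n m + 1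
        else (Bval n m ^ 2 + ((i : ℕ) + 1)) * (Bval n m + 1) * Bval n m
      else
        if (l : ℕ) + 1 ≤ 3 * m * (m + 1) - Kbv n m c i then
          (Bval n m ^ 2 + ((i : ℕ) + 1)) * Bval n m ^ 2 + 1
        else if (l : ℕ) + 1 ≤ 3 * m * (m + 1) then
          (Bval n m ^ 2 + ((i : ℕ) + 1)) * Bval n m ^ 2
        else (Bval n m ^ 2 + ((i : ℕ) + 1)) * (Bval n m + Nval m) * Bval n m

/-- The first payment date `a_{y,1}`: day `i` for the items of variable `xᵢ`. -/
def a1 {n m : ℕ} (y : Item n m) : ℕ := (itemVar y : ℕ) + 1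

/-- The second payment date `a_{y,2}`. -/
def a2 (n m : ℕ) (c : Fin m → Fin 3 → Fin n × Bool) : Item n m → ℕ
  | Sum.inl (i, j, k, pos) => if c j k = (i, pos) then n + 2 + ((j : ℕ) + 1) else n + 1
  | Sum.inr (i, l, pos) =>
      if pos then
        if (l : ℕ) + 1 ≤ 3 * m * (m + 1) - Kv n m c i then n + 2 else n + 1
      else
        if (l : ℕ) + 1 ≤ 3 * m * (m + 1) - Kbv n m c i then n + 2 else n + 1

/-- `R = N(B+1)(nB² + n(n+1)/2)B + 3m(m+1)n`. -/
def Rval (n m : ℕ) : ℕ :=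
  Nval m * (Bval n m + 1) * (n * Bval n m ^ 2 + n * (n + 1) / 2) * Bval n m +
    3 * m * (m + 1) * n

/-- The budget amount `q_i` of the budget constraint on day `i`, for `1 ≤ i ≤ n+m+2`. -/
def qv (n m : ℕ) (i : ℕ) : ℕ :=
  if i < n then Nval m * (Bval n m + 1) * i * Bval n m ^ 3 + (Bval n m ^ 3 - 1)
  else if i = n then Rval n m
  else if i = n + 1 then
    (Nval m * n + 6 * m * n + 2 * n + m * (m + 1)) * Bval n m ^ 4 + (Bval n m ^ 4 - 1)
  else if i ≤ n + m + 1 then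
    (3 * Nval m * n - 2 * (n + m + 2 - i)) * Bval n m ^ 4 + (Bval n m ^ 4 - 1)
  else 3 * Rval n m

/-- A solution of the arrears instance chooses for every item `y` one of its two options
(`z y = true` means the second option `(a_{y,2}, 2 p_{y,1})` is chosen); it is feasible if
every budget constraint is satisfied. -/
def Feasible (n m : ℕ) (c : Fin m → Fin 3 → Fin n × Bool) (z : Item n m → Bool) : Prop :=
  ∀ i : ℕ, 1 ≤ i → i ≤ n + m + 2 →
    (∑ y : Item n m,
      if (if z y then a2 n m c y else a1 y) ≤ i then
        (if z y then 2 * p1 n m c y else p1 n m c y) else 0) ≤ qv n m i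

/-- `X`: the set of items for which the second option is chosen. -/
def Xset (n m : ℕ) (z : Item n m → Bool) : Finset (Item n m) :=
  Finset.univ.filter fun y => z y = true

/-- `T_i = U_i ∪ W_i`: the positive items of variable `xᵢ`. -/
def Tset (n m : ℕ) (i : Fin n) : Finset (Item n m) :=
  Finset.univ.filter fun y => itemVar y = i ∧ itemPos y = true

/-- `T̄_i = Ū_i ∪ W̄_i`: the negative items of variable `xᵢ`. -/
def Tbar (n m : ℕ) (i : Fin n) : Finset (Item n m) :=
  Finset.univ.filter fun y => itemVar y = i ∧ itemPos y = false

/-- `Y_i = T_i ∪ T̄_i`: all items of variable `xᵢ`. -/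
def Yset (n m : ℕ) (i : Fin n) : Finset (Item n m) :=
  Finset.univ.filter fun y => itemVar y = i

/-- `Z_j`: the items whose second payment date is `n + 1 + j`. -/
def Zset (n m : ℕ) (c : Fin m → Fin 3 → Fin n × Bool) (j : ℕ) : Finset (Item n m) :=
  Finset.univ.filter fun y => a2 n m c y = n + 1 + j

namespace ArrearsProof

open Finset

variable (n m : ℕ) (c : Fin m → Fin 3 → Fin n × Bool)

/-- The `B³`-digit of an item's first payment. -/
def bet : Item n m → ℕ
  | Sum.inl (_, _, _, pos) => if pos then 1 else 0
  | Sum.inr (_, l, pos) => if pos then 1 else if (l : ℕ) = 3*m*(m+1) then Nval m else 0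

/-- The units digit (mod `B`) of an item's first payment. -/
def res : Item n m → ℕ
  | Sum.inl (i, j, k, pos) => if c j k = (i, pos) then (j : ℕ) + 2 else 0
  | Sum.inr (i, l, pos) =>
      if (l : ℕ) + 1 ≤ 3*m*(m+1) - (if pos then Kv n m c i else Kbv n m c i) then 1 else 0

lemma p1_eq (y : Item n m) :
    p1 n m c y = Bval n m ^ 4 + bet n m y * Bval n m ^ 3
      + ((itemVar y : ℕ) + 1) * Bval n m ^ 2
      + ((itemVar y : ℕ) + 1) * bet n m y * Bval n m + res n m c y := by
  obtain (⟨i, j, k, pos⟩ | ⟨i, l, pos⟩) := y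
  · cases pos <;>
      simp only [p1, pu, pub, bet, res, itemVar, if_true, if_false, Bool.false_eq_true] <;>
      ring
  · cases pos
    · simp only [p1, bet, res, itemVar, if_false, Bool.false_eq_true]
      have hl : (l : ℕ) < 3*m*(m+1) + 1 := l.isLt
      by_cases h1 : (l : ℕ) + 1 ≤ 3*m*(m+1) - Kbv n m c i
      · have h2 : (l : ℕ) ≠ 3*m*(m+1) := by omega
        simp only [h1, if_true, h2, if_false]
        ring
      · simp only [h1, if_false]
        by_cases h2 : (l : ℕ) + 1 ≤ 3*m*(m+1)
        · have h3 : (l : ℕ) ≠ 3*m*(m+1) := by omega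
          simp only [h2, if_true, h3, if_false]
          ring
        · have h3 : (l : ℕ) = 3*m*(m+1) := by omega
          rw [if_neg h2, if_pos h3]
          ring
    · simp only [p1, bet, res, itemVar, if_true]
      by_cases h1 : (l : ℕ) + 1 ≤ 3*m*(m+1) - Kv n m c i <;>
        simp only [h1, if_true, if_false] <;> ring

end ArrearsProof

section ArrearsProof2
namespace ArrearsProof

variable {n m : ℕ} {c : Fin m → Fin 3 → Fin n × Bool}

lemma N_eq : Nval m = 3*m^2 + 6*m + 1 := by unfold Nval; ring

lemma N_le (hm : 0 < m) : Nval m ≤ 10 * m^2 := by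
  rw [N_eq]; nlinarith

lemma B_eq : Bval n m = 100 * n^2 * m^2 := rfl

lemma n1_le (hn : 0 < n) : n + 1 ≤ 2 * n := by omega

lemma nmB (hn : 0 < n) (hm : 0 < m) : n + m + 3 ≤ Bval n m := by
  rw [B_eq]; nlinarith [hn, hm, mul_pos hn hm]

-- date facts
lemma a1_le (y : Item n m) : a1 y ≤ n := by
  have := (itemVar y).isLt; unfold a1; omega

lemma a2_ge (y : Item n m) : n + 1 ≤ a2 n m c y := by
  obtain (⟨i, j, k, pos⟩ | ⟨i, l, pos⟩) := y <;> unfold a2 <;> dsimp only <;> split <;> try split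
  all_goals omega

lemma a2_le (y : Item n m) : a2 n m c y ≤ n + 2 + m := by
  obtain (⟨i, j, k, pos⟩ | ⟨i, l, pos⟩) := y <;> unfold a2 <;> dsimp only
  · split
    · have := j.isLt; omega
    · omega
  · split <;> split <;> omega

lemma a2_inr_le (i : Fin n) (l : Fin (3*m*(m+1)+1)) (pos : Bool) :
    a2 n m c (Sum.inr (i, l, pos)) ≤ n + 2 := by
  unfold a2; dsimp only; split <;> split <;> omega

lemma bet_le (y : Item n m) : bet n m y ≤ Nval m := by
  have hN : 1 ≤ Nval m := by unfold Nval; omega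
  obtain (⟨i, j, k, pos⟩ | ⟨i, l, pos⟩) := y <;> unfold bet <;> dsimp only <;> split <;>
    try split
  all_goals omega

lemma res_le (y : Item n m) : res n m c y ≤ m + 1 := by
  obtain (⟨i, j, k, pos⟩ | ⟨i, l, pos⟩) := y <;> unfold res <;> dsimp only
  · split
    · have := j.isLt; omega
    · omega
  · cases pos <;> simp only [Bool.false_eq_true, if_true, if_false] <;> split <;> omega

/-- Items whose second date is at least `n+2` are not the big `w̄` item, so `bet ≤ 1`. -/
lemma bet_le_one_of_a2 (y : Item n m) (h : n + 2 ≤ a2 n m c y) : bet n m y ≤ 1 := by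
  obtain (⟨i, j, k, pos⟩ | ⟨i, l, pos⟩) := y
  · unfold bet; dsimp only; split <;> omega
  · unfold bet; dsimp only
    cases pos
    · simp only [Bool.false_eq_true, if_false]
      unfold a2 at h; dsimp only at h
      simp only [Bool.false_eq_true, if_false] at h
      split
      · rename_i hl
        by_cases h2 : (l : ℕ) + 1 ≤ 3*m*(m+1) - Kbv n m c i
        · omega
        · rw [if_neg h2] at h; omega
      · omega
    · simp only [if_true]; omega

lemma p1_le_of_a2 (hn : 0 < n) (hm : 0 < m) (y : Item n m) (h : n + 2 ≤ a2 n m c y) :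
    p1 n m c y ≤ Bval n m ^ 4 + 2 * Bval n m ^ 3 := by
  have h1 := bet_le_one_of_a2 y h
  have h2 := res_le (c := c) y
  have h3 : (itemVar y : ℕ) + 1 ≤ n := by have := (itemVar y).isLt; omega
  have hB : n + m + 3 ≤ Bval n m := nmB hn hm
  rw [p1_eq]
  have key : ((itemVar y : ℕ) + 1) * Bval n m ^ 2 + ((itemVar y : ℕ)+1) * bet n m y * Bval n m
      + res n m c y ≤ Bval n m ^ 3 := by
    calc ((itemVar y : ℕ) + 1) * Bval n m ^ 2 + ((itemVar y : ℕ)+1) * bet n m y * Bval n m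
        + res n m c y ≤ n * Bval n m ^ 2 + n * 1 * Bval n m + (m+1) := by
          gcongr
      _ ≤ Bval n m ^ 3 := by nlinarith [pow_pos (show 0 < Bval n m by rw [B_eq]; positivity) 2]
  nlinarith [key, h1, pow_pos (show 0 < Bval n m by rw [B_eq]; positivity) 3]

-- counting lemmas
lemma sum_range_lt (K A : ℕ) : (∑ x ∈ Finset.range K, if x < A then 1 else 0) = min A K := by
  induction K with
  | zero => simp
  | succ K ih =>
    rw [Finset.sum_range_succ, ih]
    split <;> omega

lemma sum_fin_le {K A : ℕ} (hA : A ≤ K) :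
    (∑ l : Fin K, if (l : ℕ) + 1 ≤ A then 1 else 0) = A := by
  rw [Fin.sum_univ_eq_sum_range (fun x => if x + 1 ≤ A then 1 else 0)]
  calc (∑ x ∈ Finset.range K, if x + 1 ≤ A then 1 else 0)
      = ∑ x ∈ Finset.range K, if x < A then 1 else 0 := by
        exact Finset.sum_congr rfl fun x _ => if_congr (by omega) rfl rfl
    _ = min A K := sum_range_lt K A
    _ = A := by omega

lemma sum_fin_single {K A : ℕ} (hA : A < K) (v : ℕ) :
    (∑ l : Fin K, if (l : ℕ) = A then v else 0) = v := by
  rw [Fin.sum_univ_eq_sum_range (fun x => if x = A then v else 0)]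
  rw [Finset.sum_ite_eq' (Finset.range K) A (fun _ => v)]
  simp [Finset.mem_range, hA]

lemma gauss (K : ℕ) : 2 * (∑ i : Fin K, ((i : ℕ) + 1)) = K * (K+1) := by
  induction K with
  | zero => simp
  | succ K ih =>
    rw [Fin.sum_univ_castSucc]
    have : ∀ i : Fin K, ((i.castSucc : ℕ) + 1) = ((i : ℕ) + 1) := fun i => rfl
    rw [Finset.sum_congr rfl (fun i _ => this i)]
    push_cast
    nlinarith [ih]

lemma gauss2 (K : ℕ) : 2 * (∑ j : Fin K, ((j : ℕ) + 2)) = K * (K+3) := by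
  have : ∀ j : Fin K, ((j : ℕ) + 2) = ((j : ℕ) + 1) + 1 := fun j => rfl
  rw [Finset.sum_congr rfl (fun j _ => this j), Finset.sum_add_distrib]
  simp only [Finset.sum_const, Finset.card_univ, Fintype.card_fin, smul_eq_mul, mul_one]
  have := gauss K
  nlinarith [this]

/-- Collapse a sum over `(i, pos)` pairs matching a literal. -/
lemma sum_match {j : Fin m} {k : Fin 3} (F : Fin n → Bool → ℕ) :
    (∑ i : Fin n, ∑ pos : Bool, if c j k = (i, pos) then F i pos else 0)
      = F (c j k).1 (c j k).2 := by
  have h1 : (∑ p : Fin n × Bool, if c j k = p then F p.1 p.2 else 0)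
      = F (c j k).1 (c j k).2 := by
    rw [Finset.sum_ite_eq Finset.univ (c j k) (fun p => F p.1 p.2)]
    simp
  rw [← h1, Fintype.sum_prod_type]

/-- Split a sum over all items into the eight structured pieces. -/
lemma item_sum (F : Item n m → ℕ) :
    (∑ y : Item n m, F y)
      = (∑ i : Fin n, ∑ j : Fin m, ∑ k : Fin 3,
          (F (Sum.inl (i, j, k, true)) + F (Sum.inl (i, j, k, false))))
        + (∑ i : Fin n, ∑ l : Fin (3*m*(m+1)+1),
          (F (Sum.inr (i, l, true)) + F (Sum.inr (i, l, false)))) := by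
  rw [Fintype.sum_sum_type]
  congr 1
  · rw [Fintype.sum_prod_type]
    refine Finset.sum_congr rfl (fun i _ => ?_)
    rw [Fintype.sum_prod_type]
    refine Finset.sum_congr rfl (fun j _ => ?_)
    rw [Fintype.sum_prod_type]
    refine Finset.sum_congr rfl (fun k _ => ?_)
    rw [Fintype.sum_bool]
  · rw [Fintype.sum_prod_type]
    refine Finset.sum_congr rfl (fun i _ => ?_)
    rw [Fintype.sum_prod_type]
    refine Finset.sum_congr rfl (fun l _ => ?_)
    rw [Fintype.sum_bool]

end ArrearsProof
end ArrearsProof2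

section ArrearsProof3
namespace ArrearsProof

variable {n m : ℕ} {c : Fin m → Fin 3 → Fin n × Bool}

lemma mp1_lt_B (hn : 0 < n) (hm : 0 < m) : m + 1 < Bval n m := by
  have := nmB hn hm; omega

lemma pu_mod (hn : 0 < n) (hm : 0 < m) (i : Fin n) (j : Fin m) (k : Fin 3) :
    pu n m c i j k % Bval n m = if c j k = (i, true) then (j : ℕ) + 2 else 0 := by
  have hlt : (if c j k = (i, true) then (j : ℕ) + 2 else 0) < Bval n m := by
    have := mp1_lt_B (n := n) (m := m) hn hm
    have := j.isLt
    split <;> omega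
  unfold pu
  rw [Nat.add_comm, Nat.add_mul_mod_self_right, Nat.mod_eq_of_lt hlt]

lemma pub_mod (hn : 0 < n) (hm : 0 < m) (i : Fin n) (j : Fin m) (k : Fin 3) :
    pub n m c i j k % Bval n m = if c j k = (i, false) then (j : ℕ) + 2 else 0 := by
  have hlt : (if c j k = (i, false) then (j : ℕ) + 2 else 0) < Bval n m := by
    have := mp1_lt_B (n := n) (m := m) hn hm
    have := j.isLt
    split <;> omega
  unfold pub
  have : (Bval n m ^ 2 + ((i : ℕ) + 1)) * Bval n m ^ 2
      = ((Bval n m ^ 2 + ((i : ℕ) + 1)) * Bval n m) * Bval n m := by ring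
  rw [this, Nat.add_comm, Nat.add_mul_mod_self_right, Nat.mod_eq_of_lt hlt]

lemma Kv_eq (hn : 0 < n) (hm : 0 < m) (i : Fin n) :
    Kv n m c i = ∑ j : Fin m, ∑ k : Fin 3, (if c j k = (i, true) then (j : ℕ) + 2 else 0) := by
  unfold Kv
  exact Finset.sum_congr rfl fun j _ => Finset.sum_congr rfl fun k _ => pu_mod hn hm i j k

lemma Kbv_eq (hn : 0 < n) (hm : 0 < m) (i : Fin n) :
    Kbv n m c i = ∑ j : Fin m, ∑ k : Fin 3, (if c j k = (i, false) then (j : ℕ) + 2 else 0) := by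
  unfold Kbv
  exact Finset.sum_congr rfl fun j _ => Finset.sum_congr rfl fun k _ => pub_mod hn hm i j k

lemma sum_j2 : (∑ j : Fin m, ∑ k : Fin 3, ((j : ℕ) + 2)) = 3 * ∑ j : Fin m, ((j : ℕ) + 2) := by
  rw [Finset.mul_sum]
  refine Finset.sum_congr rfl fun j _ => ?_
  rw [Finset.sum_const, Finset.card_univ]
  simp
  try ring

lemma Kv_le (hn : 0 < n) (hm : 0 < m) (i : Fin n) : Kv n m c i ≤ 3 * m * (m + 1) := by
  have h1 : Kv n m c i ≤ ∑ j : Fin m, ∑ k : Fin 3, ((j : ℕ) + 2) := by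
    rw [Kv_eq hn hm]
    exact Finset.sum_le_sum fun j _ => Finset.sum_le_sum fun k _ => by split <;> omega
  rw [sum_j2] at h1
  have h2 := gauss2 m
  nlinarith [h1, h2]

lemma Kbv_le (hn : 0 < n) (hm : 0 < m) (i : Fin n) : Kbv n m c i ≤ 3 * m * (m + 1) := by
  have h1 : Kbv n m c i ≤ ∑ j : Fin m, ∑ k : Fin 3, ((j : ℕ) + 2) := by
    rw [Kbv_eq hn hm]
    exact Finset.sum_le_sum fun j _ => Finset.sum_le_sum fun k _ => by split <;> omega
  rw [sum_j2] at h1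
  have h2 := gauss2 m
  nlinarith [h1, h2]

lemma sum_KKb (hn : 0 < n) (hm : 0 < m) :
    (∑ i : Fin n, (Kv n m c i + Kbv n m c i)) = ∑ j : Fin m, ∑ k : Fin 3, ((j : ℕ) + 2) := by
  have h1 : ∀ i : Fin n, Kv n m c i + Kbv n m c i
      = ∑ j : Fin m, ∑ k : Fin 3,
        ((if c j k = (i, true) then (j : ℕ) + 2 else 0)
          + (if c j k = (i, false) then (j : ℕ) + 2 else 0)) := by
    intro i
    rw [Kv_eq hn hm, Kbv_eq hn hm, ← Finset.sum_add_distrib]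
    exact Finset.sum_congr rfl fun j _ => by rw [← Finset.sum_add_distrib]
  rw [Finset.sum_congr rfl fun i _ => h1 i]
  rw [Finset.sum_comm]
  refine Finset.sum_congr rfl fun j _ => ?_
  rw [Finset.sum_comm]
  refine Finset.sum_congr rfl fun k _ => ?_
  have := sum_match (n := n) (m := m) (c := c) (j := j) (k := k)
      (fun _ pos => ((j : ℕ) + 2))
  calc (∑ i : Fin n, ((if c j k = (i, true) then (j : ℕ) + 2 else 0)
          + (if c j k = (i, false) then (j : ℕ) + 2 else 0)))
      = ∑ i : Fin n, ∑ pos : Bool, (if c j k = (i, pos) then (j : ℕ) + 2 else 0) := by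
        exact Finset.sum_congr rfl fun i _ => by rw [Fintype.sum_bool]
    _ = (j : ℕ) + 2 := this

end ArrearsProof
end ArrearsProof3

section ArrearsProof4
namespace ArrearsProof

variable {n m : ℕ} {c : Fin m → Fin 3 → Fin n × Bool}

/-- Collapse a paired sum over `i` of both polarities. -/
lemma sum_pair (j : Fin m) (k : Fin 3) (F : Fin n → Bool → ℕ) :
    (∑ i : Fin n, ((if c j k = (i, true) then F i true else 0)
        + (if c j k = (i, false) then F i false else 0)))
      = F (c j k).1 (c j k).2 := by
  have h : ∀ i : Fin n, ((if c j k = (i, true) then F i true else 0)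
        + (if c j k = (i, false) then F i false else 0))
      = ∑ pos : Bool, (if c j k = (i, pos) then F i pos else 0) := by
    intro i; rw [Fintype.sum_bool]
  rw [Finset.sum_congr rfl fun i _ => h i]
  exact sum_match F

/-- Digit decomposition of any weighted sum of first payments. -/
lemma digit_sum (w : Item n m → ℕ) :
    (∑ y : Item n m, w y * p1 n m c y)
      = (∑ y, w y) * Bval n m ^ 4 + (∑ y, w y * bet n m y) * Bval n m ^ 3
        + (∑ y, w y * ((itemVar y : ℕ) + 1)) * Bval n m ^ 2
        + (∑ y, w y * (((itemVar y : ℕ) + 1) * bet n m y)) * Bval n m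
        + ∑ y, w y * res n m c y := by
  have hy : ∀ y : Item n m, w y * p1 n m c y
      = w y * Bval n m ^ 4 + (w y * bet n m y) * Bval n m ^ 3
        + (w y * ((itemVar y : ℕ) + 1)) * Bval n m ^ 2
        + (w y * (((itemVar y : ℕ) + 1) * bet n m y)) * Bval n m
        + w y * res n m c y := by
    intro y; rw [p1_eq]; ring
  rw [Finset.sum_congr rfl fun y _ => hy y]
  rw [Finset.sum_add_distrib, Finset.sum_add_distrib, Finset.sum_add_distrib,
    Finset.sum_add_distrib, ← Finset.sum_mul, ← Finset.sum_mul, ← Finset.sum_mul,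
    ← Finset.sum_mul]

lemma US1 : (∑ _y : Item n m, (1 : ℕ)) = 2 * Nval m * n := by
  rw [item_sum (fun _ => 1)]
  simp [Finset.sum_const, Finset.card_univ, Nval]
  ring

lemma US2 : (∑ y : Item n m, bet n m y) = 2 * Nval m * n := by
  rw [item_sum (bet n m)]
  have h1 : ∀ (i : Fin n) (j : Fin m) (k : Fin 3),
      bet n m (Sum.inl (i, j, k, true)) + bet n m (Sum.inl (i, j, k, false)) = 1 := by
    intro i j k; simp [bet]
  have h2 : ∀ (i : Fin n), (∑ l : Fin (3*m*(m+1)+1),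
      (bet n m (Sum.inr (i, l, true)) + bet n m (Sum.inr (i, l, false))))
      = (3*m*(m+1)+1) + Nval m := by
    intro i
    have : ∀ l : Fin (3*m*(m+1)+1),
        bet n m (Sum.inr (i, l, true)) + bet n m (Sum.inr (i, l, false))
        = 1 + (if (l : ℕ) = 3*m*(m+1) then Nval m else 0) := by
      intro l; simp [bet]
    rw [Finset.sum_congr rfl fun l _ => this l, Finset.sum_add_distrib,
      sum_fin_single (by omega) (Nval m), Finset.sum_const, Finset.card_univ]
    simp
  rw [Finset.sum_congr rfl fun i _ => (by
    rw [Finset.sum_congr rfl fun j _ => (by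
      rw [Finset.sum_congr rfl fun k _ => h1 i j k, Finset.sum_const, Finset.card_univ] :
        (∑ k : Fin 3, (bet n m (Sum.inl (i, j, k, true)) + bet n m (Sum.inl (i, j, k, false))))
          = Fintype.card (Fin 3) • 1), Finset.sum_const, Finset.card_univ] :
    (∑ j : Fin m, ∑ k : Fin 3,
        (bet n m (Sum.inl (i, j, k, true)) + bet n m (Sum.inl (i, j, k, false))))
      = Fintype.card (Fin m) • (Fintype.card (Fin 3) • 1))]
  rw [Finset.sum_congr rfl fun i _ => h2 i]
  simp [Finset.sum_const, Finset.card_univ, Nval]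
  ring

end ArrearsProof
end ArrearsProof4

section ArrearsProof5
namespace ArrearsProof

variable {n m : ℕ} {c : Fin m → Fin 3 → Fin n × Bool}

lemma sum3_const (g : Fin n → ℕ) :
    (∑ i : Fin n, ∑ _j : Fin m, ∑ _k : Fin 3, g i) = m * 3 * ∑ i : Fin n, g i := by
  rw [Finset.mul_sum]
  refine Finset.sum_congr rfl fun i _ => ?_
  simp [Finset.sum_const, Finset.card_univ]
  try ring

lemma sumW_const (g : Fin n → ℕ) :
    (∑ i : Fin n, ∑ _l : Fin (3*m*(m+1)+1), g i) = (3*m*(m+1)+1) * ∑ i : Fin n, g i := by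
  rw [Finset.mul_sum]
  refine Finset.sum_congr rfl fun i _ => ?_
  simp [Finset.sum_const, Finset.card_univ]
  try ring

lemma US3 : (∑ y : Item n m, ((itemVar y : ℕ) + 1))
    = 2 * Nval m * ∑ i : Fin n, ((i : ℕ) + 1) := by
  rw [item_sum (fun y => ((itemVar y : ℕ) + 1))]
  have h1 : (∑ i : Fin n, ∑ _j : Fin m, ∑ _k : Fin 3, (((i:ℕ)+1) + ((i:ℕ)+1)))
      = m * 3 * ∑ i : Fin n, (((i:ℕ)+1) + ((i:ℕ)+1)) := sum3_const _
  have h2 : (∑ i : Fin n, ∑ _l : Fin (3*m*(m+1)+1), (((i:ℕ)+1) + ((i:ℕ)+1)))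
      = (3*m*(m+1)+1) * ∑ i : Fin n, (((i:ℕ)+1) + ((i:ℕ)+1)) := sumW_const _
  show (∑ i : Fin n, ∑ _j : Fin m, ∑ _k : Fin 3, (((i:ℕ)+1) + ((i:ℕ)+1)))
      + (∑ i : Fin n, ∑ _l : Fin (3*m*(m+1)+1), (((i:ℕ)+1) + ((i:ℕ)+1)))
      = 2 * Nval m * ∑ i : Fin n, ((i : ℕ) + 1)
  have hg : (∑ i : Fin n, (((i:ℕ)+1) + ((i:ℕ)+1))) = 2 * ∑ i : Fin n, ((i : ℕ) + 1) := by
    rw [Finset.mul_sum]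
    exact Finset.sum_congr rfl fun i _ => by omega
  rw [h1, h2, hg]
  unfold Nval; ring

lemma US4 : (∑ y : Item n m, ((itemVar y : ℕ) + 1) * bet n m y)
    = 2 * Nval m * ∑ i : Fin n, ((i : ℕ) + 1) := by
  rw [item_sum (fun y => ((itemVar y : ℕ) + 1) * bet n m y)]
  have h1 : ∀ (i : Fin n) (j : Fin m) (k : Fin 3),
      ((itemVar (Sum.inl (i,j,k,true) : Item n m) : ℕ) + 1) * bet n m (Sum.inl (i,j,k,true))
        + ((itemVar (Sum.inl (i,j,k,false) : Item n m) : ℕ) + 1) * bet n m (Sum.inl (i,j,k,false))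
      = ((i:ℕ)+1) := by
    intro i j k; simp [bet, itemVar]
  have h2 : ∀ (i : Fin n), (∑ l : Fin (3*m*(m+1)+1),
      (((itemVar (Sum.inr (i,l,true) : Item n m) : ℕ) + 1) * bet n m (Sum.inr (i,l,true))
        + ((itemVar (Sum.inr (i,l,false) : Item n m) : ℕ) + 1) * bet n m (Sum.inr (i,l,false))))
      = (3*m*(m+1)+1) * ((i:ℕ)+1) + ((i:ℕ)+1) * Nval m := by
    intro i
    have hpt : ∀ l : Fin (3*m*(m+1)+1),
        (((itemVar (Sum.inr (i,l,true) : Item n m) : ℕ) + 1) * bet n m (Sum.inr (i,l,true))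
          + ((itemVar (Sum.inr (i,l,false) : Item n m) : ℕ) + 1) * bet n m (Sum.inr (i,l,false)))
        = ((i:ℕ)+1) + (if (l:ℕ) = 3*m*(m+1) then ((i:ℕ)+1) * Nval m else 0) := by
      intro l
      simp only [bet, itemVar, if_true, Bool.false_eq_true, if_false]
      split <;> ring
    rw [Finset.sum_congr rfl fun l _ => hpt l, Finset.sum_add_distrib,
      sum_fin_single (by omega) (((i:ℕ)+1) * Nval m), Finset.sum_const, Finset.card_univ]
    simp
  rw [Finset.sum_congr rfl fun i _ => (Finset.sum_congr rfl fun j _ =>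
      (Finset.sum_congr rfl fun k _ => h1 i j k))]
  rw [Finset.sum_congr rfl fun i _ => h2 i]
  rw [sum3_const (fun i => ((i:ℕ)+1))]
  have hh : (∑ i : Fin n, ((3*m*(m+1)+1) * ((i:ℕ)+1) + ((i:ℕ)+1) * Nval m))
      = (3*m*(m+1)+1) * (∑ i : Fin n, ((i:ℕ)+1)) + (∑ i : Fin n, ((i:ℕ)+1)) * Nval m := by
    rw [Finset.sum_add_distrib, ← Finset.mul_sum, ← Finset.sum_mul]
  rw [hh]
  unfold Nval; ring

lemma US5 (hn : 0 < n) (hm : 0 < m) :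
    (∑ y : Item n m, res n m c y) = 2 * (3*m*(m+1)) * n := by
  rw [item_sum (res n m c)]
  have h1 : (∑ i : Fin n, ∑ j : Fin m, ∑ k : Fin 3,
      (res n m c (Sum.inl (i,j,k,true)) + res n m c (Sum.inl (i,j,k,false))))
      = ∑ i : Fin n, (Kv n m c i + Kbv n m c i) := by
    refine Finset.sum_congr rfl fun i _ => ?_
    rw [Kv_eq hn hm, Kbv_eq hn hm, ← Finset.sum_add_distrib]
    refine Finset.sum_congr rfl fun j _ => ?_
    rw [← Finset.sum_add_distrib]
    rfl
  have h2 : (∑ i : Fin n, ∑ l : Fin (3*m*(m+1)+1),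
      (res n m c (Sum.inr (i,l,true)) + res n m c (Sum.inr (i,l,false))))
      = ∑ i : Fin n, ((3*m*(m+1) - Kv n m c i) + (3*m*(m+1) - Kbv n m c i)) := by
    refine Finset.sum_congr rfl fun i _ => ?_
    have hpt : ∀ l : Fin (3*m*(m+1)+1),
        (res n m c (Sum.inr (i,l,true)) + res n m c (Sum.inr (i,l,false)))
        = (if (l:ℕ)+1 ≤ 3*m*(m+1) - Kv n m c i then 1 else 0)
          + (if (l:ℕ)+1 ≤ 3*m*(m+1) - Kbv n m c i then 1 else 0) := by
      intro l; rfl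
    rw [Finset.sum_congr rfl fun l _ => hpt l, Finset.sum_add_distrib,
      sum_fin_le (by omega), sum_fin_le (by omega)]
  rw [h1, h2]
  have h3 : (∑ i : Fin n, ((3*m*(m+1) - Kv n m c i) + (3*m*(m+1) - Kbv n m c i)))
      + (∑ i : Fin n, (Kv n m c i + Kbv n m c i)) = n * (2 * (3*m*(m+1))) := by
    rw [← Finset.sum_add_distrib]
    rw [Finset.sum_congr rfl fun i _ => (by
      have := Kv_le (c := c) hn hm i
      have := Kbv_le (c := c) hn hm i
      omega :
      (3*m*(m+1) - Kv n m c i) + (3*m*(m+1) - Kbv n m c i) + (Kv n m c i + Kbv n m c i)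
        = 2 * (3*m*(m+1)))]
    simp [Finset.sum_const, Finset.card_univ]
  linarith [h3]

lemma Rval_eq :
    Rval n m = Nval m * n * Bval n m ^ 4 + Nval m * n * Bval n m ^ 3
      + Nval m * (∑ i : Fin n, ((i : ℕ) + 1)) * Bval n m ^ 2
      + Nval m * (∑ i : Fin n, ((i : ℕ) + 1)) * Bval n m + 3*m*(m+1)*n := by
  have hg : n * (n + 1) / 2 = ∑ i : Fin n, ((i : ℕ) + 1) := by
    rw [← gauss n, Nat.mul_div_cancel_left _ (by norm_num : (0:ℕ) < 2)]
  unfold Rval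
  rw [hg]
  ring

/-- Total first payments equal `2R`. -/
lemma total_p1 (hn : 0 < n) (hm : 0 < m) :
    (∑ y : Item n m, p1 n m c y) = 2 * Rval n m := by
  have h := digit_sum (n := n) (m := m) (c := c) (fun _ => 1)
  simp only [one_mul] at h
  rw [h, US1, US2, US3, US4, US5 hn hm, Rval_eq]
  ring

end ArrearsProof
end ArrearsProof5

section ArrearsProof6
namespace ArrearsProof

variable {n m : ℕ} {c : Fin m → Fin 3 → Fin n × Bool} {z : Item n m → Bool}

/-- The item corresponding to literal `k` of clause `j`. -/
def mk (c : Fin m → Fin 3 → Fin n × Bool) (j : Fin m) (k : Fin 3) : Item n m :=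
  Sum.inl ((c j k).1, j, k, (c j k).2)

/-- The number of items of clause `j` whose second option is chosen. -/
def iot (c : Fin m → Fin 3 → Fin n × Bool) (z : Item n m → Bool) (j : Fin m) : ℕ :=
  ∑ k : Fin 3, if z (mk c j k) = true then 1 else 0

lemma sum_swap3 (f : Fin n → Fin m → Fin 3 → ℕ) :
    (∑ i : Fin n, ∑ j : Fin m, ∑ k : Fin 3, f i j k)
      = ∑ j : Fin m, ∑ k : Fin 3, ∑ i : Fin n, f i j k := by
  rw [Finset.sum_comm]
  exact Finset.sum_congr rfl fun j _ => Finset.sum_comm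

lemma inl_collapse (w : Fin m → Fin 3 → Fin n → Bool → ℕ) :
    (∑ i : Fin n, ∑ j : Fin m, ∑ k : Fin 3,
      ((if c j k = (i, true) then w j k i true else 0)
        + (if c j k = (i, false) then w j k i false else 0)))
      = ∑ j : Fin m, ∑ k : Fin 3, w j k (c j k).1 (c j k).2 := by
  rw [sum_swap3]
  exact Finset.sum_congr rfl fun j _ => Finset.sum_congr rfl fun k _ =>
    sum_pair j k (fun i pos => w j k i pos)

lemma a2_inl (i : Fin n) (j : Fin m) (k : Fin 3) (pos : Bool) :
    a2 n m c (Sum.inl (i,j,k,pos)) = if c j k = (i, pos) then n + 2 + ((j:ℕ)+1) else n+1 := rfl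

lemma a2_inr (i : Fin n) (l : Fin (3*m*(m+1)+1)) (pos : Bool) :
    a2 n m c (Sum.inr (i,l,pos))
      = if (l:ℕ)+1 ≤ 3*m*(m+1) - (if pos then Kv n m c i else Kbv n m c i)
        then n+2 else n+1 := by
  cases pos <;> rfl

/-- Rewriting the feasibility sum for a day `d ≤ n`. -/
lemma LHS_day_le_n (d : ℕ) (hd : d ≤ n) :
    (∑ y : Item n m,
      if (if z y then a2 n m c y else a1 y) ≤ d then
        (if z y then 2 * p1 n m c y else p1 n m c y) else 0)
      = ∑ y : Item n m, if z y = true then 0 else (if a1 y ≤ d then p1 n m c y else 0) := by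
  refine Finset.sum_congr rfl fun y _ => ?_
  have h2 := a2_ge (c := c) y
  by_cases hzy : z y = true
  · simp only [hzy, if_true]
    rw [if_neg (by omega)]
  · have hz' : z y = false := by simp at hzy; exact hzy
    simp only [hz', Bool.false_eq_true, if_false]
    try split <;> rfl

/-- Rewriting the feasibility sum for a day `d ≥ n`, together with the deferred tail. -/
lemma LHS_day_ge_n (d : ℕ) (hd : n ≤ d) :
    (∑ y : Item n m,
      if (if z y then a2 n m c y else a1 y) ≤ d then
        (if z y then 2 * p1 n m c y else p1 n m c y) else 0)
      + 2 * (∑ y : Item n m, if z y = true ∧ d < a2 n m c y then p1 n m c y else 0)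
      = (∑ y : Item n m, if z y = true then 0 else p1 n m c y)
        + 2 * (∑ y : Item n m, if z y = true then p1 n m c y else 0) := by
  rw [Finset.mul_sum, Finset.mul_sum, ← Finset.sum_add_distrib, ← Finset.sum_add_distrib]
  refine Finset.sum_congr rfl fun y _ => ?_
  have h1 := a1_le y
  by_cases hzy : z y = true
  · simp only [hzy, if_true, true_and]
    by_cases hda : a2 n m c y ≤ d
    · rw [if_pos hda, if_neg (by omega)]
      try ring
    · rw [if_neg hda, if_pos (by omega)]
      try ring
  · have hz' : z y = false := by simp at hzy; exact hzy
    simp only [hz', Bool.false_eq_true, if_false, false_and]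
    try rw [if_pos (by omega)]
    try simp

lemma qv_at_n (hn : 0 < n) : qv n m n = Rval n m := by
  unfold qv; rw [if_neg (by omega), if_pos rfl]

lemma qv_at_last (hm : 0 < m) : qv n m (n+m+2) = 3 * Rval n m := by
  unfold qv
  rw [if_neg (by omega), if_neg (by omega), if_neg (by omega), if_neg (by omega)]

lemma qv_at_n1 (hm : 0 < m) : qv n m (n+1)
    = (Nval m * n + 6*m*n + 2*n + m*(m+1)) * Bval n m ^ 4 + (Bval n m ^ 4 - 1) := by
  unfold qv
  rw [if_neg (by omega), if_neg (by omega), if_pos rfl]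

lemma qv_at_t (t : ℕ) (ht : t < m) : qv n m (n+2+t)
    = (3 * Nval m * n - 2*(m - t)) * Bval n m ^ 4 + (Bval n m ^ 4 - 1) := by
  unfold qv
  rw [if_neg (by omega), if_neg (by omega), if_neg (by omega), if_pos (by omega)]
  congr 3
  omega

/-- The deferred-count beyond day `n+1` plus the weighted clause count equals the
res-digit of `X`. -/
lemma count_decomp :
    (∑ y : Item n m, if z y = true ∧ (n+1) < a2 n m c y then 1 else 0)
      + (∑ j : Fin m, ((j : ℕ) + 1) * iot c z j)
      = ∑ y : Item n m, (if z y = true then 1 else 0) * res n m c y := by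
  have hres : (∑ y : Item n m, (if z y = true then 1 else 0) * res n m c y)
      = (∑ j : Fin m, ∑ k : Fin 3, (if z (mk c j k) = true then ((j:ℕ)+2) else 0))
        + (∑ i : Fin n, ∑ l : Fin (3*m*(m+1)+1),
          ((if z (Sum.inr (i,l,true)) = true
              ∧ (l:ℕ)+1 ≤ 3*m*(m+1) - Kv n m c i then 1 else 0)
            + (if z (Sum.inr (i,l,false)) = true
              ∧ (l:ℕ)+1 ≤ 3*m*(m+1) - Kbv n m c i then 1 else 0))) := by
    rw [item_sum (fun y => (if z y = true then 1 else 0) * res n m c y)]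
    congr 1
    · delta mk
      rw [← inl_collapse (c := c)
        (fun j k i pos => if z (Sum.inl (i,j,k,pos)) = true then ((j:ℕ)+2) else 0)]
      · refine Finset.sum_congr rfl fun i _ => Finset.sum_congr rfl fun j _ =>
          Finset.sum_congr rfl fun k _ => ?_
        show (if z (Sum.inl (i,j,k,true)) = true then 1 else 0)
              * (if c j k = (i, true) then ((j:ℕ)+2) else 0)
            + (if z (Sum.inl (i,j,k,false)) = true then 1 else 0)
              * (if c j k = (i, false) then ((j:ℕ)+2) else 0)
          = _
        by_cases hzt : z (Sum.inl (i,j,k,true)) = true <;>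
          by_cases hzf : z (Sum.inl (i,j,k,false)) = true <;>
          by_cases hc1 : c j k = (i, true) <;> by_cases hc2 : c j k = (i, false) <;>
          simp [hzt, hzf, hc1, hc2]
    · refine Finset.sum_congr rfl fun i _ => Finset.sum_congr rfl fun l _ => ?_
      show (if z (Sum.inr (i,l,true)) = true then 1 else 0)
            * (if (l:ℕ)+1 ≤ 3*m*(m+1) - Kv n m c i then 1 else 0)
          + (if z (Sum.inr (i,l,false)) = true then 1 else 0)
            * (if (l:ℕ)+1 ≤ 3*m*(m+1) - Kbv n m c i then 1 else 0)
        = _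
      by_cases hzt : z (Sum.inr (i,l,true)) = true <;>
        by_cases hzf : z (Sum.inr (i,l,false)) = true <;>
        by_cases hc1 : (l:ℕ)+1 ≤ 3*m*(m+1) - Kv n m c i <;>
        by_cases hc2 : (l:ℕ)+1 ≤ 3*m*(m+1) - Kbv n m c i <;>
        simp [hzt, hzf, hc1, hc2]
  have hcnt : (∑ y : Item n m, if z y = true ∧ (n+1) < a2 n m c y then 1 else 0)
      = (∑ j : Fin m, ∑ k : Fin 3, (if z (mk c j k) = true then 1 else 0))
        + (∑ i : Fin n, ∑ l : Fin (3*m*(m+1)+1),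
          ((if z (Sum.inr (i,l,true)) = true
              ∧ (l:ℕ)+1 ≤ 3*m*(m+1) - Kv n m c i then 1 else 0)
            + (if z (Sum.inr (i,l,false)) = true
              ∧ (l:ℕ)+1 ≤ 3*m*(m+1) - Kbv n m c i then 1 else 0))) := by
    rw [item_sum (fun y => if z y = true ∧ (n+1) < a2 n m c y then 1 else 0)]
    congr 1
    · delta mk
      rw [← inl_collapse (c := c)
        (fun j k i pos => if z (Sum.inl (i,j,k,pos)) = true then 1 else 0)]
      refine Finset.sum_congr rfl fun i _ => Finset.sum_congr rfl fun j _ =>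
        Finset.sum_congr rfl fun k _ => ?_
      by_cases hc1 : c j k = (i, true) <;> by_cases hc2 : c j k = (i, false) <;>
        by_cases hzt : z (Sum.inl (i,j,k,true)) = true <;>
        by_cases hzf : z (Sum.inl (i,j,k,false)) = true <;>
        simp [a2_inl, hc1, hc2, hzt, hzf] <;> omega
    · refine Finset.sum_congr rfl fun i _ => Finset.sum_congr rfl fun l _ => ?_
      by_cases hc1 : (l:ℕ)+1 ≤ 3*m*(m+1) - Kv n m c i <;>
        by_cases hc2 : (l:ℕ)+1 ≤ 3*m*(m+1) - Kbv n m c i <;>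
        by_cases hzt : z (Sum.inr (i,l,true)) = true <;>
        by_cases hzf : z (Sum.inr (i,l,false)) = true <;>
        simp [a2_inr, hc1, hc2, hzt, hzf] <;> omega
  rw [hres, hcnt]
  have hjk : (∑ j : Fin m, ∑ k : Fin 3, (if z (mk c j k) = true then 1 else 0))
      + (∑ j : Fin m, ((j : ℕ) + 1) * iot c z j)
      = ∑ j : Fin m, ∑ k : Fin 3, (if z (mk c j k) = true then ((j:ℕ)+2) else 0) := by
    rw [← Finset.sum_add_distrib]
    refine Finset.sum_congr rfl fun j _ => ?_
    unfold iot
    rw [Finset.mul_sum, ← Finset.sum_add_distrib]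
    refine Finset.sum_congr rfl fun k _ => ?_
    by_cases hzy : z (mk c j k) = true <;> simp [hzy] <;> try omega
  omega

/-- The deferred count beyond day `n+2+t` is the suffix clause count. -/
lemma count_suffix (t : ℕ) :
    (∑ y : Item n m, if z y = true ∧ (n+2+t) < a2 n m c y then 1 else 0)
      = ∑ j : Fin m, (if t ≤ (j : ℕ) then iot c z j else 0) := by
  rw [item_sum (fun y => if z y = true ∧ (n+2+t) < a2 n m c y then 1 else 0)]
  have hinr : (∑ i : Fin n, ∑ l : Fin (3*m*(m+1)+1),
      ((if z (Sum.inr (i,l,true)) = true ∧ (n+2+t) < a2 n m c (Sum.inr (i,l,true)) then 1 else 0)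
        + (if z (Sum.inr (i,l,false)) = true
            ∧ (n+2+t) < a2 n m c (Sum.inr (i,l,false)) then 1 else 0))) = 0 := by
    refine Finset.sum_eq_zero fun i _ => Finset.sum_eq_zero fun l _ => ?_
    have h1 := a2_inr_le (c := c) i l true
    have h2 := a2_inr_le (c := c) i l false
    rw [if_neg (by omega), if_neg (by omega)]
    rfl
  rw [hinr, Nat.add_zero]
  have h1 : (∑ i : Fin n, ∑ j : Fin m, ∑ k : Fin 3,
      ((if z (Sum.inl (i,j,k,true)) = true
          ∧ (n+2+t) < a2 n m c (Sum.inl (i,j,k,true)) then 1 else 0)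
        + (if z (Sum.inl (i,j,k,false)) = true
          ∧ (n+2+t) < a2 n m c (Sum.inl (i,j,k,false)) then 1 else 0)))
      = ∑ j : Fin m, ∑ k : Fin 3,
        (if z (Sum.inl ((c j k).1, j, k, (c j k).2) : Item n m) = true ∧ t ≤ (j:ℕ) then 1 else 0) := by
    rw [← inl_collapse (c := c)
      (fun j k i pos => if z (Sum.inl (i,j,k,pos)) = true ∧ t ≤ (j:ℕ) then 1 else 0)]
    refine Finset.sum_congr rfl fun i _ => Finset.sum_congr rfl fun j _ =>
      Finset.sum_congr rfl fun k _ => ?_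
    by_cases hc1 : c j k = (i, true) <;> by_cases hc2 : c j k = (i, false) <;>
      by_cases hzt : z (Sum.inl (i,j,k,true)) = true <;>
      by_cases hzf : z (Sum.inl (i,j,k,false)) = true <;>
      by_cases hjt : t ≤ (j:ℕ) <;>
      simp [a2_inl, hc1, hc2, hzt, hzf, hjt] <;> first | omega | (split_ifs <;> omega)
  rw [h1]
  refine Finset.sum_congr rfl fun j _ => ?_
  by_cases hj : t ≤ (j:ℕ)
  · rw [if_pos hj]
    unfold iot mk
    exact Finset.sum_congr rfl fun k _ => if_congr (by simp [hj]) rfl rfl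
  · rw [if_neg hj]
    exact Finset.sum_eq_zero fun k _ => by rw [if_neg (by tauto)]

end ArrearsProof
end ArrearsProof6

section ArrearsProof7
namespace ArrearsProof

lemma digit_peel {B a r a' r' : ℕ} (hr : r < B) (hr' : r' < B)
    (h : a * B + r = a' * B + r') : a = a' ∧ r = r' := by
  have e1 : (a * B + r) % B = r % B := by rw [mul_comm]; exact Nat.mul_add_mod B a r
  have e2 : (a' * B + r') % B = r' % B := by rw [mul_comm]; exact Nat.mul_add_mod B a' r'
  rw [Nat.mod_eq_of_lt hr] at e1
  rw [Nat.mod_eq_of_lt hr'] at e2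
  have hrr : r = r' := by rw [← e1, h, e2]
  subst hrr
  have hB : 0 < B := by omega
  have : a * B = a' * B := by omega
  exact ⟨Nat.eq_of_mul_eq_mul_right hB this, rfl⟩

lemma fin_single_f {K A : ℕ} (hA : A < K) (f : Fin K → ℕ) :
    (∑ j : Fin K, if (j : ℕ) = A then f j else 0) = f ⟨A, hA⟩ := by
  have h1 : ∀ j : Fin K, (if (j : ℕ) = A then f j else 0)
      = (if j = (⟨A, hA⟩ : Fin K) then f j else 0) := by
    intro j
    exact if_congr (by rw [Fin.ext_iff]) rfl rfl
  rw [Finset.sum_congr rfl fun j _ => h1 j]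
  simp

lemma gaussdown (K : ℕ) : 2 * (∑ t ∈ Finset.range K, (K - t)) = K * (K + 1) := by
  induction K with
  | zero => simp
  | succ K ih =>
    have h1 : (∑ t ∈ Finset.range (K+1), (K + 1 - t))
        = (∑ t ∈ Finset.range K, (K - t)) + (K + 1) := by
      rw [Finset.sum_range_succ]
      have : (∑ t ∈ Finset.range K, (K + 1 - t))
          = ∑ t ∈ Finset.range K, ((K - t) + 1) := by
        refine Finset.sum_congr rfl fun t ht => ?_
        have := Finset.mem_range.mp ht
        omega
      rw [this, Finset.sum_add_distrib]
      simp [Finset.sum_const]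
      omega
    rw [h1]
    nlinarith [ih]

/-- The Abel forcing argument on clauses: if every suffix count is at least `m - t` and
the total weighted count is at most `m(m+1)/2`, every clause count is exactly 1. -/
lemma iot_forcing {m : ℕ} (ι : Fin m → ℕ)
    (hsuf : ∀ t : ℕ, t < m → m - t ≤ ∑ j : Fin m, (if t ≤ (j : ℕ) then ι j else 0))
    (hW : 2 * (∑ j : Fin m, ((j : ℕ) + 1) * ι j) ≤ m * (m + 1)) :
    ∀ j : Fin m, ι j = 1 := by
  classical
  set s : ℕ → ℕ := fun t => ∑ j : Fin m, (if t ≤ (j : ℕ) then ι j else 0) with hs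
  have hid : (∑ t ∈ Finset.range m, s t) = ∑ j : Fin m, ((j : ℕ) + 1) * ι j := by
    rw [hs]
    rw [Finset.sum_comm]
    refine Finset.sum_congr rfl fun j _ => ?_
    have h1 : (∑ t ∈ Finset.range m, if t ≤ (j : ℕ) then ι j else 0)
        = ∑ t ∈ Finset.range m, (if t < (j : ℕ) + 1 then 1 else 0) * ι j := by
      refine Finset.sum_congr rfl fun t _ => ?_
      split_ifs <;> first | exact (one_mul _).symm | exact (zero_mul _).symm | omega
    rw [h1, ← Finset.sum_mul, sum_range_lt]
    have := j.isLt
    have : min ((j : ℕ) + 1) m = (j : ℕ) + 1 := by omega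
    rw [this]
  have hlow : ∀ t ∈ Finset.range m, m - t ≤ s t :=
    fun t ht => hsuf t (Finset.mem_range.mp ht)
  have hsums : (∑ t ∈ Finset.range m, (m - t)) = ∑ t ∈ Finset.range m, s t := by
    have h1 : (∑ t ∈ Finset.range m, (m - t)) ≤ ∑ t ∈ Finset.range m, s t :=
      Finset.sum_le_sum hlow
    have h2 := gaussdown m
    omega
  have heach : ∀ t ∈ Finset.range m, m - t = s t :=
    (Finset.sum_eq_sum_iff_of_le hlow).mp hsums
  have hzero : s m = 0 := by
    rw [hs]
    refine Finset.sum_eq_zero fun j _ => ?_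
    have := j.isLt
    rw [if_neg (by omega)]
  have hstep : ∀ (t : ℕ) (ht : t < m), s t = ι ⟨t, ht⟩ + s (t + 1) := by
    intro t ht
    show (∑ j : Fin m, (if t ≤ (j : ℕ) then ι j else 0)) = _
    have h1 : ∀ j : Fin m, (if t ≤ (j : ℕ) then ι j else 0)
        = (if (j : ℕ) = t then ι j else 0) + (if t + 1 ≤ (j : ℕ) then ι j else 0) := by
      intro j; split_ifs <;> omega
    rw [Finset.sum_congr rfl fun j _ => h1 j, Finset.sum_add_distrib, fin_single_f ht ι]
  intro j
  have hj := j.isLt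
  have h1 : m - (j : ℕ) = s (j : ℕ) := heach _ (Finset.mem_range.mpr hj)
  have h2 : s (j : ℕ) = ι ⟨(j : ℕ), hj⟩ + s ((j : ℕ) + 1) := hstep _ hj
  have hjj : ι ⟨(j : ℕ), hj⟩ = ι j := by congr
  by_cases hlast : (j : ℕ) + 1 < m
  · have h3 : m - ((j : ℕ) + 1) = s ((j : ℕ) + 1) := heach _ (Finset.mem_range.mpr hlast)
    omega
  · have hl2 : (j : ℕ) + 1 = m := by omega
    rw [hl2, hzero] at h2
    omega

end ArrearsProof
end ArrearsProof7

section ArrearsProof8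
namespace ArrearsProof

variable {n m : ℕ} {c : Fin m → Fin 3 → Fin n × Bool} {z : Item n m → Bool}

lemma p1_le_fine (hn : 0 < n) (hm : 0 < m) (y : Item n m) (h : n + 2 ≤ a2 n m c y) :
    p1 n m c y ≤ Bval n m ^ 4 + Bval n m ^ 3
      + (n * Bval n m ^ 2 + n * Bval n m + (m+1)) := by
  have h1 := bet_le_one_of_a2 y h
  have h2 := res_le (c := c) y
  have h3 : (itemVar y : ℕ) + 1 ≤ n := by have := (itemVar y).isLt; omega
  rw [p1_eq]
  have hb3 : bet n m y * Bval n m ^ 3 ≤ Bval n m ^ 3 := by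
    nlinarith [pow_pos (show 0 < Bval n m from by rw [B_eq]; positivity) 3]
  have hv2 : ((itemVar y : ℕ) + 1) * Bval n m ^ 2 ≤ n * Bval n m ^ 2 := by
    exact Nat.mul_le_mul_right _ h3
  have hv1 : ((itemVar y : ℕ) + 1) * bet n m y * Bval n m ≤ n * Bval n m := by
    have : ((itemVar y : ℕ) + 1) * bet n m y ≤ n := by nlinarith
    exact Nat.mul_le_mul_right _ this
  omega

-- numeric facts
lemma numA (hn : 0 < n) (hm : 0 < m) : 6*m*(m+1)*n < Bval n m := by
  rw [B_eq]
  obtain ⟨a, rfl⟩ : ∃ a, n = a+1 := ⟨n-1, by omega⟩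
  obtain ⟨b, rfl⟩ : ∃ b, m = b+1 := ⟨m-1, by omega⟩
  nlinarith [mul_nonneg (mul_nonneg a.zero_le b.zero_le) b.zero_le, mul_nonneg a.zero_le b.zero_le, mul_nonneg (mul_nonneg (mul_nonneg a.zero_le a.zero_le) b.zero_le) b.zero_le, mul_nonneg (mul_nonneg a.zero_le a.zero_le) b.zero_le, mul_nonneg (mul_nonneg a.zero_le b.zero_le) (mul_nonneg a.zero_le b.zero_le), mul_nonneg (mul_nonneg a.zero_le a.zero_le) (mul_nonneg b.zero_le b.zero_le), mul_nonneg (mul_nonneg a.zero_le b.zero_le) a.zero_le]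
lemma numB (hn : 0 < n) (hm : 0 < m) : 4*m < Bval n m := by
  rw [B_eq]
  obtain ⟨a, rfl⟩ : ∃ a, n = a+1 := ⟨n-1, by omega⟩
  obtain ⟨b, rfl⟩ : ∃ b, m = b+1 := ⟨m-1, by omega⟩
  nlinarith [mul_nonneg (mul_nonneg a.zero_le b.zero_le) b.zero_le, mul_nonneg a.zero_le b.zero_le, mul_nonneg (mul_nonneg (mul_nonneg a.zero_le a.zero_le) b.zero_le) b.zero_le, mul_nonneg (mul_nonneg a.zero_le a.zero_le) b.zero_le, mul_nonneg (mul_nonneg a.zero_le b.zero_le) (mul_nonneg a.zero_le b.zero_le), mul_nonneg (mul_nonneg a.zero_le a.zero_le) (mul_nonneg b.zero_le b.zero_le), mul_nonneg (mul_nonneg a.zero_le b.zero_le) a.zero_le]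
lemma numC (hn : 0 < n) (hm : 0 < m) : 2*m ≤ 3 * Nval m * n := by
  rw [N_eq]
  obtain ⟨a, rfl⟩ : ∃ a, n = a+1 := ⟨n-1, by omega⟩
  obtain ⟨b, rfl⟩ : ∃ b, m = b+1 := ⟨m-1, by omega⟩
  nlinarith [mul_nonneg (mul_nonneg a.zero_le b.zero_le) b.zero_le, mul_nonneg a.zero_le b.zero_le, mul_nonneg (mul_nonneg (mul_nonneg a.zero_le a.zero_le) b.zero_le) b.zero_le, mul_nonneg (mul_nonneg a.zero_le a.zero_le) b.zero_le, mul_nonneg (mul_nonneg a.zero_le b.zero_le) (mul_nonneg a.zero_le b.zero_le), mul_nonneg (mul_nonneg a.zero_le a.zero_le) (mul_nonneg b.zero_le b.zero_le), mul_nonneg (mul_nonneg a.zero_le b.zero_le) a.zero_le]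
lemma numD (hn : 0 < n) (hm : 0 < m) :
    n * Bval n m ^ 2 + n * Bval n m + (m+1) ≤ 3 * n * Bval n m ^ 2 := by
  have h1 : m + 1 ≤ Bval n m := by have := nmB hn hm; omega
  have h2 : Bval n m ≤ Bval n m ^ 2 := by nlinarith [nmB hn hm]
  nlinarith [nmB hn hm]
lemma numE (hn : 0 < n) (hm : 0 < m) : 2*(3*m*(m+1)*n) * (3*n) ≤ Bval n m := by
  rw [B_eq]
  obtain ⟨a, rfl⟩ : ∃ a, n = a+1 := ⟨n-1, by omega⟩
  obtain ⟨b, rfl⟩ : ∃ b, m = b+1 := ⟨m-1, by omega⟩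
  nlinarith [mul_nonneg (mul_nonneg a.zero_le b.zero_le) b.zero_le, mul_nonneg a.zero_le b.zero_le, mul_nonneg (mul_nonneg (mul_nonneg a.zero_le a.zero_le) b.zero_le) b.zero_le, mul_nonneg (mul_nonneg a.zero_le a.zero_le) b.zero_le, mul_nonneg (mul_nonneg a.zero_le b.zero_le) (mul_nonneg a.zero_le b.zero_le), mul_nonneg (mul_nonneg a.zero_le a.zero_le) (mul_nonneg b.zero_le b.zero_le), mul_nonneg (mul_nonneg a.zero_le b.zero_le) a.zero_le]
lemma numF (hn : 0 < n) (hm : 0 < m) : 2*(3*m*(m+1)*n) + 1 ≤ 3 * Nval m * n := by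
  rw [N_eq]
  obtain ⟨a, rfl⟩ : ∃ a, n = a+1 := ⟨n-1, by omega⟩
  obtain ⟨b, rfl⟩ : ∃ b, m = b+1 := ⟨m-1, by omega⟩
  nlinarith [mul_nonneg (mul_nonneg a.zero_le b.zero_le) b.zero_le, mul_nonneg a.zero_le b.zero_le, mul_nonneg (mul_nonneg (mul_nonneg a.zero_le a.zero_le) b.zero_le) b.zero_le, mul_nonneg (mul_nonneg a.zero_le a.zero_le) b.zero_le, mul_nonneg (mul_nonneg a.zero_le b.zero_le) (mul_nonneg a.zero_le b.zero_le), mul_nonneg (mul_nonneg a.zero_le a.zero_le) (mul_nonneg b.zero_le b.zero_le), mul_nonneg (mul_nonneg a.zero_le b.zero_le) a.zero_le]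
lemma numG : (Nval m * n + 6*m*n + 2*n + m*(m+1)) + 2*(3*m*(m+1)*n)
    = 3 * Nval m * n + m*(m+1) := by
  rw [N_eq]; ring

end ArrearsProof
end ArrearsProof8

open ArrearsProof in
set_option maxHeartbeats 2000000 in
/-- For every feasible solution of the constructed arrears instance `I′` and every
`j = 2, …, m+1`, exactly one item of `Z_j = {y : a_{y,2} = n+1+j}` lies in `X`; that is,
among the items corresponding to the three literals of clause `c_{j−1}`, exactly one is
in `X`. -/
theorem feasible_sol_one_in_three (n m : ℕ) (hn : 0 < n) (hm : 0 < m)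
    (c : Fin m → Fin 3 → Fin n × Bool)
    (z : Item n m → Bool) (hz : Feasible n m c z) :
    ∀ j : ℕ, 2 ≤ j → j ≤ m + 1 → (Xset n m z ∩ Zset n m c j).card = 1 := by
  classical
  intro jj hjj2 hjjm
  -- abbreviations
  have hB4pos : 0 < Bval n m ^ 4 := pow_pos (by rw [B_eq]; positivity) 4
  have hB3pos : 0 < Bval n m ^ 3 := pow_pos (by rw [B_eq]; positivity) 3
  -- Step C: the deferred and non-deferred first payments each total R.
  have htot : (∑ y : Item n m, if z y = true then 0 else p1 n m c y)
      + (∑ y : Item n m, if z y = true then p1 n m c y else 0) = 2 * Rval n m := by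
    rw [← Finset.sum_add_distrib]
    rw [Finset.sum_congr rfl (fun y (_ : y ∈ Finset.univ) => (by
      by_cases hzy : z y = true <;> simp [hzy] :
      (if z y = true then 0 else p1 n m c y) + (if z y = true then p1 n m c y else 0)
        = p1 n m c y))]
    exact total_p1 hn hm
  have hday_n : (∑ y : Item n m, if z y = true then 0 else p1 n m c y) ≤ Rval n m := by
    have h := hz n (by omega) (by omega)
    rw [LHS_day_le_n n (le_refl n), qv_at_n hn] at h
    rw [Finset.sum_congr rfl (fun y (_ : y ∈ Finset.univ) => (by
      by_cases hzy : z y = true <;> simp [hzy, a1_le y] :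
      (if z y = true then 0 else (if a1 y ≤ n then p1 n m c y else 0))
        = (if z y = true then 0 else p1 n m c y)))] at h
    exact h
  have hSXR : (∑ y : Item n m, if z y = true then p1 n m c y else 0) = Rval n m := by
    have h := hz (n+m+2) (by omega) (by omega)
    have hsuf0 : (∑ y : Item n m,
        if z y = true ∧ (n+m+2) < a2 n m c y then p1 n m c y else 0) = 0 :=
      Finset.sum_eq_zero fun y _ => by
        have := a2_le (c := c) y
        rw [if_neg (by rintro ⟨-, h2⟩; omega)]
    have key := LHS_day_ge_n (c := c) (z := z) (n+m+2) (by omega)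
    rw [hsuf0] at key
    rw [qv_at_last hm] at h
    omega
  have hSXbR : (∑ y : Item n m, if z y = true then 0 else p1 n m c y) = Rval n m := by
    omega
  -- Step D : the res-digit of X equals 3m(m+1)n.
  have hdig := digit_sum (n := n) (m := m) (c := c) (fun y => if z y = true then 1 else 0)
  have hL : (∑ y : Item n m, (if z y = true then 1 else 0) * p1 n m c y)
      = ∑ y : Item n m, if z y = true then p1 n m c y else 0 :=
    Finset.sum_congr rfl fun y _ => by by_cases hzy : z y = true <;> simp [hzy]
  rw [hL, hSXR, Rval_eq] at hdig
  have hble : ∀ f : Item n m → ℕ,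
      (∑ y : Item n m, (if z y = true then 1 else 0) * f y) ≤ ∑ y : Item n m, f y :=
    fun f => Finset.sum_le_sum fun y _ => by by_cases hzy : z y = true <;> simp [hzy]
  have hrb : (∑ y : Item n m, (if z y = true then 1 else 0) * res n m c y)
      ≤ 2*(3*m*(m+1))*n := by
    calc (∑ y : Item n m, (if z y = true then 1 else 0) * res n m c y)
        ≤ ∑ y : Item n m, res n m c y := hble _
      _ = 2*(3*m*(m+1))*n := US5 hn hm
  have hQB := numA hn hm
  have heq2 : ∀ x4 x3 x2 x1 x0 : ℕ,
      x4 * Bval n m ^ 4 + x3 * Bval n m ^ 3 + x2 * Bval n m ^ 2 + x1 * Bval n m + x0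
        = (((x4 * Bval n m + x3) * Bval n m + x2) * Bval n m + x1) * Bval n m + x0 := by
    intros; ring
  rw [heq2, heq2] at hdig
  have hsrX : (∑ y : Item n m, (if z y = true then 1 else 0) * res n m c y)
      = 3*m*(m+1)*n :=
    ((digit_peel (by linarith [hQB]) (by linarith [hrb, hQB]) hdig).2).symm
  -- Step F : weighted clause count bound from day n+1.
  have hdecomp : (∑ y : Item n m, if z y = true ∧ (n+1) < a2 n m c y then 1 else 0)
      + (∑ j : Fin m, ((j : ℕ)+1) * iot c z j) = 3*m*(m+1)*n := by
    rw [count_decomp]; exact hsrX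
  have h1 := hz (n+1) (by omega) (by omega)
  have key1 := LHS_day_ge_n (c := c) (z := z) (n+1) (by omega)
  have h3R1 : 3 * Rval n m ≤ qv n m (n+1)
      + 2 * (∑ y : Item n m,
          if z y = true ∧ (n+1) < a2 n m c y then p1 n m c y else 0) := by
    linarith [key1, h1, hSXR, hSXbR]
  have hsfx1 : (∑ y : Item n m,
        if z y = true ∧ (n+1) < a2 n m c y then p1 n m c y else 0)
      ≤ (∑ y : Item n m, if z y = true ∧ (n+1) < a2 n m c y then 1 else 0)
        * (Bval n m ^ 4 + Bval n m ^ 3 + (n * Bval n m ^ 2 + n * Bval n m + (m+1))) := by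
    rw [Finset.sum_mul]
    refine Finset.sum_le_sum fun y _ => ?_
    by_cases hcond : z y = true ∧ (n+1) < a2 n m c y
    · rw [if_pos hcond, if_pos hcond, one_mul]
      exact p1_le_fine hn hm y (by omega)
    · rw [if_neg hcond, if_neg hcond, zero_mul]
  have hRlow : 3 * Nval m * n * Bval n m ^ 4 + 3 * Nval m * n * Bval n m ^ 3
      ≤ 3 * Rval n m := by
    rw [Rval_eq]
    nlinarith [Nat.zero_le (Nval m * (∑ i : Fin n, ((i : ℕ)+1)) * Bval n m ^ 2),
      Nat.zero_le (Nval m * (∑ i : Fin n, ((i : ℕ)+1)) * Bval n m),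
      Nat.zero_le (3*m*(m+1)*n)]
  have hWb : 2 * (∑ j : Fin m, ((j : ℕ)+1) * iot c z j) ≤ m*(m+1) := by
    by_contra hcon
    push_neg at hcon
    have hcg_le : 2 * (∑ y : Item n m, if z y = true ∧ (n+1) < a2 n m c y then 1 else 0)
        + m*(m+1) + 1 ≤ 2 * (3*m*(m+1)*n) := by linarith [hdecomp, hcon]
    have e1 : qv n m (n+1) + 1
        = (Nval m * n + 6*m*n + 2*n + m*(m+1) + 1) * Bval n m ^ 4 := by
      rw [qv_at_n1 hm]
      have hp : Bval n m ^ 4 - 1 + 1 = Bval n m ^ 4 := by omega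
      linarith [hp]
    have hc1 : (Nval m * n + 6*m*n + 2*n + m*(m+1) + 1)
        + 2 * (∑ y : Item n m, if z y = true ∧ (n+1) < a2 n m c y then 1 else 0)
        ≤ 3 * Nval m * n := by
      have hg := numG (n := n) (m := m)
      linarith [hg, hcg_le]
    have hD := numD hn hm
    have h2cgD : 2 * (∑ y : Item n m, if z y = true ∧ (n+1) < a2 n m c y then 1 else 0)
        * (n * Bval n m ^ 2 + n * Bval n m + (m+1)) ≤ Bval n m ^ 3 := by
      calc 2 * (∑ y : Item n m, if z y = true ∧ (n+1) < a2 n m c y then 1 else 0)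
            * (n * Bval n m ^ 2 + n * Bval n m + (m+1))
          ≤ (2*(3*m*(m+1)*n)) * (3 * n * Bval n m ^ 2) :=
            Nat.mul_le_mul (by omega) hD
        _ = (2*(3*m*(m+1)*n) * (3*n)) * Bval n m ^ 2 := by ring
        _ ≤ Bval n m * Bval n m ^ 2 := Nat.mul_le_mul_right _ (numE hn hm)
        _ = Bval n m ^ 3 := by ring
    have hcgP3 : 2 * (∑ y : Item n m, if z y = true ∧ (n+1) < a2 n m c y then 1 else 0)
        * Bval n m ^ 3 ≤ 2 * (3*m*(m+1)*n) * Bval n m ^ 3 :=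
      Nat.mul_le_mul_right _ (by omega)
    have hQ3 : 2 * (3*m*(m+1)*n) * Bval n m ^ 3 + Bval n m ^ 3
        ≤ 3 * Nval m * n * Bval n m ^ 3 := by
      have h5 := numF hn hm
      nlinarith [h5, hB3pos]
    have hmulc1 : ((Nval m * n + 6*m*n + 2*n + m*(m+1) + 1)
        + 2 * (∑ y : Item n m, if z y = true ∧ (n+1) < a2 n m c y then 1 else 0))
          * Bval n m ^ 4 ≤ 3 * Nval m * n * Bval n m ^ 4 :=
      Nat.mul_le_mul_right _ hc1
    have hchain : 3 * Rval n m + 1 ≤ 3 * Rval n m := by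
      calc 3 * Rval n m + 1
          ≤ qv n m (n+1) + 1 + 2 * (∑ y : Item n m,
              if z y = true ∧ (n+1) < a2 n m c y then p1 n m c y else 0) := by
            linarith [h3R1]
        _ ≤ qv n m (n+1) + 1
            + 2 * ((∑ y : Item n m, if z y = true ∧ (n+1) < a2 n m c y then 1 else 0)
              * (Bval n m ^ 4 + Bval n m ^ 3
                + (n * Bval n m ^ 2 + n * Bval n m + (m+1)))) := by
            linarith [hsfx1]
        _ = ((Nval m * n + 6*m*n + 2*n + m*(m+1) + 1)
              + 2 * (∑ y : Item n m, if z y = true ∧ (n+1) < a2 n m c y then 1 else 0))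
                * Bval n m ^ 4
            + 2 * (∑ y : Item n m, if z y = true ∧ (n+1) < a2 n m c y then 1 else 0)
                * Bval n m ^ 3
            + 2 * (∑ y : Item n m, if z y = true ∧ (n+1) < a2 n m c y then 1 else 0)
                * (n * Bval n m ^ 2 + n * Bval n m + (m+1)) := by
            rw [e1]; ring
        _ ≤ 3 * Nval m * n * Bval n m ^ 4 + 2 * (3*m*(m+1)*n) * Bval n m ^ 3
            + Bval n m ^ 3 := by
            linarith [hmulc1, hcgP3, h2cgD]
        _ ≤ 3 * Nval m * n * Bval n m ^ 4 + 3 * Nval m * n * Bval n m ^ 3 := by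
            linarith [hQ3]
        _ ≤ 3 * Rval n m := hRlow
    omega
  -- Step E : suffix clause counts from days n+2+t.
  have hsuf : ∀ t : ℕ, t < m →
      m - t ≤ ∑ j : Fin m, (if t ≤ (j : ℕ) then iot c z j else 0) := by
    intro t ht
    by_contra hcon
    push_neg at hcon
    have hcnt := count_suffix (c := c) (z := z) t
    have h1t := hz (n+2+t) (by omega) (by omega)
    have keyt := LHS_day_ge_n (c := c) (z := z) (n+2+t) (by omega)
    have h3Rt : 3 * Rval n m ≤ qv n m (n+2+t)
        + 2 * (∑ y : Item n m,
            if z y = true ∧ (n+2+t) < a2 n m c y then p1 n m c y else 0) := by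
      linarith [keyt, h1t, hSXR, hSXbR]
    have hsfxt : (∑ y : Item n m,
          if z y = true ∧ (n+2+t) < a2 n m c y then p1 n m c y else 0)
        ≤ (∑ j : Fin m, (if t ≤ (j : ℕ) then iot c z j else 0))
          * (Bval n m ^ 4 + 2 * Bval n m ^ 3) := by
      rw [← hcnt, Finset.sum_mul]
      refine Finset.sum_le_sum fun y _ => ?_
      by_cases hcond : z y = true ∧ (n+2+t) < a2 n m c y
      · rw [if_pos hcond, if_pos hcond, one_mul]
        exact p1_le_of_a2 hn hm y (by omega)
      · rw [if_neg hcond, if_neg hcond, zero_mul]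
    have ha : 2*(m-t) ≤ 3 * Nval m * n := by
      have := numC hn hm
      have : 2*(m-t) ≤ 2*m := by omega
      linarith [numC hn hm]
    have hs2 : 3 * Nval m * n - 2*(m-t) + 2*(m-t) = 3 * Nval m * n := Nat.sub_add_cancel ha
    have e1t : qv n m (n+2+t) + 1 + 2*(m-t) * Bval n m ^ 4
        = (3 * Nval m * n + 1) * Bval n m ^ 4 := by
      rw [qv_at_t t ht]
      have h2 : (3 * Nval m * n - 2*(m-t)) * Bval n m ^ 4 + 2*(m-t) * Bval n m ^ 4
          = 3 * Nval m * n * Bval n m ^ 4 := by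
        rw [← Nat.add_mul, hs2]
      have hp : Bval n m ^ 4 - 1 + 1 = Bval n m ^ 4 := by omega
      linarith [h2, hp]
    have hst1 : (∑ j : Fin m, (if t ≤ (j : ℕ) then iot c z j else 0)) + 1 ≤ m - t := by
      omega
    have hmul1 : 2 * ((∑ j : Fin m, (if t ≤ (j : ℕ) then iot c z j else 0)) + 1)
        * Bval n m ^ 4 ≤ 2*(m-t) * Bval n m ^ 4 :=
      Nat.mul_le_mul_right _ (by omega)
    have hmul2 : 4 * (∑ j : Fin m, (if t ≤ (j : ℕ) then iot c z j else 0)) * Bval n m ^ 3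
        ≤ 4 * m * Bval n m ^ 3 :=
      Nat.mul_le_mul_right _ (by omega)
    have hmul3 : 4 * m * Bval n m ^ 3 + 1 ≤ Bval n m ^ 4 := by
      have h4 : 4 * m * Bval n m ^ 3 < Bval n m * Bval n m ^ 3 :=
        Nat.mul_lt_mul_of_lt_of_le (numB hn hm) (le_refl _) hB3pos
      have : Bval n m * Bval n m ^ 3 = Bval n m ^ 4 := by ring
      omega
    have hchain : 3 * Rval n m + 1 + 2*(m-t) * Bval n m ^ 4
        ≤ (3 * Nval m * n + 1) * Bval n m ^ 4
          + 2 * (∑ j : Fin m, (if t ≤ (j : ℕ) then iot c z j else 0))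
            * (Bval n m ^ 4 + 2 * Bval n m ^ 3) := by
      calc 3 * Rval n m + 1 + 2*(m-t) * Bval n m ^ 4
          ≤ qv n m (n+2+t) + 1 + 2*(m-t) * Bval n m ^ 4
            + 2 * (∑ y : Item n m,
              if z y = true ∧ (n+2+t) < a2 n m c y then p1 n m c y else 0) := by
            linarith [h3Rt]
        _ = (3 * Nval m * n + 1) * Bval n m ^ 4
            + 2 * (∑ y : Item n m,
              if z y = true ∧ (n+2+t) < a2 n m c y then p1 n m c y else 0) := by
            linarith [e1t]
        _ ≤ _ := by linarith [hsfxt]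
    linarith [hchain, hRlow, hmul1, hmul2, hmul3,
      Nat.zero_le (Nval m * n * Bval n m ^ 3),
      Nat.zero_le ((∑ j : Fin m, (if t ≤ (j : ℕ) then iot c z j else 0)) * Bval n m ^ 3),
      Nat.zero_le ((∑ j : Fin m, (if t ≤ (j : ℕ) then iot c z j else 0)) * Bval n m ^ 4)]
  -- Forcing: every clause has exactly one chosen item.
  have hforce := iot_forcing (iot c z) hsuf hWb
  -- Final: identify the cardinality with `iot`.
  have hj2 : jj - 2 < m := by omega
  have hXZ : (Xset n m z ∩ Zset n m c jj)
      = Finset.univ.filter (fun y => z y = true ∧ a2 n m c y = n + 1 + jj) := by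
    ext y
    simp [Xset, Zset, Finset.mem_inter, Finset.mem_filter]
  rw [hXZ, Finset.card_filter]
  rw [item_sum (fun y => if z y = true ∧ a2 n m c y = n + 1 + jj then 1 else 0)]
  have hinr0 : (∑ i : Fin n, ∑ l : Fin (3*m*(m+1)+1),
      ((if z (Sum.inr (i,l,true)) = true
          ∧ a2 n m c (Sum.inr (i,l,true)) = n+1+jj then 1 else 0)
        + (if z (Sum.inr (i,l,false)) = true
          ∧ a2 n m c (Sum.inr (i,l,false)) = n+1+jj then 1 else 0))) = 0 := by
    refine Finset.sum_eq_zero fun i _ => Finset.sum_eq_zero fun l _ => ?_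
    have ht1 := a2_inr_le (c := c) i l true
    have ht2 := a2_inr_le (c := c) i l false
    rw [if_neg (by rintro ⟨-, h2⟩; omega), if_neg (by rintro ⟨-, h2⟩; omega)]
    rfl
  rw [hinr0, Nat.add_zero]
  have hinl : (∑ i : Fin n, ∑ j : Fin m, ∑ k : Fin 3,
      ((if z (Sum.inl (i,j,k,true)) = true
          ∧ a2 n m c (Sum.inl (i,j,k,true)) = n+1+jj then 1 else 0)
        + (if z (Sum.inl (i,j,k,false)) = true
          ∧ a2 n m c (Sum.inl (i,j,k,false)) = n+1+jj then 1 else 0)))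
      = ∑ j : Fin m, ∑ k : Fin 3,
        (if z (Sum.inl ((c j k).1, j, k, (c j k).2) : Item n m) = true
          ∧ (j : ℕ) + 2 = jj then 1 else 0) := by
    rw [← inl_collapse (c := c)
      (fun j k i pos => if z (Sum.inl (i,j,k,pos)) = true ∧ (j:ℕ)+2 = jj then 1 else 0)]
    refine Finset.sum_congr rfl fun i _ => Finset.sum_congr rfl fun j _ =>
      Finset.sum_congr rfl fun k _ => ?_
    by_cases hc1 : c j k = (i, true) <;> by_cases hc2 : c j k = (i, false) <;>
      by_cases hzt : z (Sum.inl (i,j,k,true)) = true <;>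
      by_cases hzf : z (Sum.inl (i,j,k,false)) = true <;>
      simp [a2_inl, hc1, hc2, hzt, hzf] <;> first | omega | (split_ifs <;> omega)
  rw [hinl]
  have hpull : ∀ j : Fin m, (∑ k : Fin 3,
      (if z (Sum.inl ((c j k).1, j, k, (c j k).2) : Item n m) = true
        ∧ (j : ℕ) + 2 = jj then 1 else 0))
      = if (j : ℕ) = jj - 2 then iot c z j else 0 := by
    intro j
    by_cases hcnd : (j : ℕ) + 2 = jj
    · rw [if_pos (by omega)]
      unfold iot mk
      exact Finset.sum_congr rfl fun k _ => if_congr (by simp [hcnd]) rfl rfl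
    · rw [if_neg (by omega)]
      exact Finset.sum_eq_zero fun k _ => by rw [if_neg (by tauto)]
  rw [Finset.sum_congr rfl fun j _ => hpull j, fin_single_f hj2 (iot c z)]
  exact hforce ⟨jj-2, hj2⟩
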